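/- Let P be a CPT from finite set X to finite set Y whose rows p_x are probability mass functions, and let P' be the CPT obtained by amalgamating a subset I ⊆ X of conditioning levels into a single level whose row is the unweighted average (1/|I|) Σ_{x∈I} p_x (keeping all other rows unchanged). Then d⁺(P') ≤ d⁺(P). -/

import Mathlib

noncomputable def dV {Z : Type*} [Fintype Z] (p q : Z → ℝ) : ℝ :=
  (1/2) * ∑ z, |p z - q z|

def IsPMF {Z : Type*} [Fintype Z] (p : Z → ℝ) : Prop :=
  (∀ z, 0 ≤ p z) ∧ ∑ z, p z = 1

noncomputable def diam {X Y : Type*} [Fintype X] [Fintype Y]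
    (P : X → Y → ℝ) : ℝ :=
  ⨆ x : X, ⨆ x' : X, dV (P x) (P x')

lemma dV_self {Z : Type*} [Fintype Z] (p : Z → ℝ) : dV p p = 0 := by
  simp [dV]

lemma dV_comm {Z : Type*} [Fintype Z] (p q : Z → ℝ) : dV p q = dV q p := by
  simp [dV, abs_sub_comm]

/-- Amalgamating the conditioning levels in `I` into one level whose row is the
unweighted average of the rows indexed by `I`, keeping the other rows. -/
theorem stmt17 {X Y : Type*} [Fintype X] [Fintype Y] [DecidableEq X]
    (P : X → Y → ℝ) (hP : ∀ x, IsPMF (P x))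
    (I : Finset X) (hI : I.Nonempty)
    (P' : {x : X // x ∉ I} ⊕ Unit → Y → ℝ)
    (hP'rows : ∀ x : {x : X // x ∉ I}, P' (Sum.inl x) = P x.1)
    (hP'amal : ∀ u : Unit, P' (Sum.inr u) =
      fun y => (1 / (I.card : ℝ)) * ∑ x ∈ I, P x y) :
    diam P' ≤ diam P := by
  obtain ⟨x0, hx0⟩ := hI
  have hXne : Nonempty X := ⟨x0⟩
  have hn : (0:ℝ) < I.card := by have h := Finset.card_pos.mpr ⟨x0, hx0⟩; exact_mod_cast h
  -- every pairwise distance is at most the diameter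
  have hle : ∀ x x' : X, dV (P x) (P x') ≤ diam P := by
    intro x x'
    have h1 : dV (P x) (P x') ≤ ⨆ x'' : X, dV (P x) (P x'') :=
      le_ciSup (f := fun x'' : X => dV (P x) (P x'')) (Set.finite_range _).bddAbove x'
    exact h1.trans (le_ciSup (Set.finite_range (fun x : X => ⨆ x' : X, dV (P x) (P x'))).bddAbove x)
  have hdiam0 : 0 ≤ diam P := by
    have := hle x0 x0
    rwa [dV_self] at this
  -- convexity bound for the averaged row
  have key : ∀ q : Y → ℝ, dV (fun y => (1 / (I.card : ℝ)) * ∑ x ∈ I, P x y) q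
      ≤ (1 / (I.card : ℝ)) * ∑ x ∈ I, dV (P x) q := by
    intro q
    have hstep : ∀ y : Y, |(1 / (I.card : ℝ)) * ∑ x ∈ I, P x y - q y|
        ≤ (1 / (I.card : ℝ)) * ∑ x ∈ I, |P x y - q y| := by
      intro y
      have heq : (1 / (I.card : ℝ)) * ∑ x ∈ I, P x y - q y
          = (1 / (I.card : ℝ)) * ∑ x ∈ I, (P x y - q y) := by
        rw [Finset.sum_sub_distrib, Finset.sum_const, mul_sub]
        field_simp
        rw [nsmul_eq_mul]
      rw [heq, abs_mul, abs_of_pos (by positivity : (0:ℝ) < 1 / (I.card : ℝ))]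
      gcongr
      exact Finset.abs_sum_le_sum_abs _ _
    calc dV (fun y => (1 / (I.card : ℝ)) * ∑ x ∈ I, P x y) q
        ≤ (1/2) * ∑ y, (1 / (I.card : ℝ)) * ∑ x ∈ I, |P x y - q y| := by
          unfold dV
          gcongr with y
          exact hstep y
      _ = ∑ y, ∑ x ∈ I, (1/2) * ((1 / (I.card : ℝ)) * |P x y - q y|) := by
          rw [Finset.mul_sum]
          exact Finset.sum_congr rfl fun y _ => by rw [Finset.mul_sum, Finset.mul_sum]
      _ = ∑ x ∈ I, ∑ y, (1/2) * ((1 / (I.card : ℝ)) * |P x y - q y|) := Finset.sum_comm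
      _ = (1 / (I.card : ℝ)) * ∑ x ∈ I, dV (P x) q := by
          rw [Finset.mul_sum]
          refine Finset.sum_congr rfl fun x _ => ?_
          unfold dV
          rw [Finset.mul_sum, Finset.mul_sum]
          exact Finset.sum_congr rfl fun y _ => by ring
  have havg : ∀ q : Y → ℝ, (∀ x ∈ I, dV (P x) q ≤ diam P) →
      dV (fun y => (1 / (I.card : ℝ)) * ∑ x ∈ I, P x y) q ≤ diam P := by
    intro q hq
    refine (key q).trans ?_
    have hsum : ∑ x ∈ I, dV (P x) q ≤ (I.card : ℝ) * diam P := by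
      calc ∑ x ∈ I, dV (P x) q ≤ ∑ _x ∈ I, diam P := Finset.sum_le_sum hq
        _ = (I.card : ℝ) * diam P := by rw [Finset.sum_const, nsmul_eq_mul]
    calc (1 / (I.card : ℝ)) * ∑ x ∈ I, dV (P x) q
        ≤ (1 / (I.card : ℝ)) * ((I.card : ℝ) * diam P) := by gcongr
      _ = diam P := by field_simp
  -- pairwise bound for P'
  have hpair : ∀ a b : {x : X // x ∉ I} ⊕ Unit, dV (P' a) (P' b) ≤ diam P := by
    rintro (⟨x, hx⟩ | u) (⟨x', hx'⟩ | u')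
    · rw [hP'rows, hP'rows]; exact hle x x'
    · rw [hP'rows, hP'amal, dV_comm]
      exact havg (P x) fun x'' _ => hle x'' x
    · rw [hP'rows, hP'amal]
      exact havg (P x') fun x'' _ => hle x'' x'
    · rw [hP'amal, dV_self]; exact hdiam0
  have hne : Nonempty ({x : X // x ∉ I} ⊕ Unit) := ⟨Sum.inr ()⟩
  refine ciSup_le fun a => ciSup_le fun b => hpair a b
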